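/- Let D ⊆ ℝ² be open and let X, Y : D → ℝ be C² functions with Y(u,v) ∈ (−π/2, π/2) for all (u,v) ∈ D. Define K = e^{2X}·cos Y and κ = e^{2X}·sin Y (so K > 0). Then the pair of equations (K² + κ²)^{1/4}·Δ ln (K² + κ²)^{1/8} = K and (K² + κ²)^{1/4}·Δ arctan(κ/K) = 2κ holds on D if and only if the pair of equations Δ X = 2e^{X}·cos Y and Δ Y = 2e^{X}·sin Y holds on D. -/

import Mathlib

/-- Partial derivative with respect to the first variable. -/
noncomputable def pd1 (f : ℝ × ℝ → ℝ) (p : ℝ × ℝ) : ℝ := fderiv ℝ f p (1, 0)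

/-- Partial derivative with respect to the second variable. -/
noncomputable def pd2 (f : ℝ × ℝ → ℝ) (p : ℝ × ℝ) : ℝ := fderiv ℝ f p (0, 1)

/-- The Laplace operator Δ = ∂²/∂u² + ∂²/∂v². -/
noncomputable def lap (f : ℝ × ℝ → ℝ) (p : ℝ × ℝ) : ℝ := pd1 (pd1 f) p + pd2 (pd2 f) p

lemma fderiv_eqOn {D : Set (ℝ × ℝ)} (hD : IsOpen D) {f g : ℝ × ℝ → ℝ}
    (h : Set.EqOn f g D) {p : ℝ × ℝ} (hp : p ∈ D) : fderiv ℝ f p = fderiv ℝ g p :=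
  Filter.EventuallyEq.fderiv_eq (Filter.eventuallyEq_of_mem (hD.mem_nhds hp) h)

lemma lap_congr_on {D : Set (ℝ × ℝ)} (hD : IsOpen D) {f g : ℝ × ℝ → ℝ}
    (h : Set.EqOn f g D) {p : ℝ × ℝ} (hp : p ∈ D) : lap f p = lap g p := by
  have h1 : Set.EqOn (pd1 f) (pd1 g) D := fun q hq => by
    simp only [pd1, fderiv_eqOn hD h hq]
  have h2 : Set.EqOn (pd2 f) (pd2 g) D := fun q hq => by
    simp only [pd2, fderiv_eqOn hD h hq]
  simp only [lap, pd1, pd2, fderiv_eqOn hD h1 hp, fderiv_eqOn hD h2 hp]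

lemma diffAt_fderiv_apply {D : Set (ℝ × ℝ)} (hD : IsOpen D) {f : ℝ × ℝ → ℝ}
    (hf : ContDiffOn ℝ 2 f D) {p : ℝ × ℝ} (hp : p ∈ D) (v : ℝ × ℝ) :
    DifferentiableAt ℝ (fun q => fderiv ℝ f q v) p := by
  have hF : ContDiffOn ℝ 1 (fun x => fderiv ℝ f x) D :=
    hf.fderiv_of_isOpen hD (by norm_num)
  have hFp : DifferentiableAt ℝ (fun x => fderiv ℝ f x) p :=
    ((hF.differentiableOn one_ne_zero).differentiableAt (hD.mem_nhds hp))
  exact hFp.clm_apply (differentiableAt_const v)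

lemma lap_const_mul_on {D : Set (ℝ × ℝ)} (hD : IsOpen D) {f : ℝ × ℝ → ℝ}
    (hf : ContDiffOn ℝ 2 f D) (c : ℝ) {p : ℝ × ℝ} (hp : p ∈ D) :
    lap (fun q => c * f q) p = c * lap f p := by
  have hdf : ∀ q ∈ D, DifferentiableAt ℝ f q := fun q hq =>
    (hf.contDiffAt (hD.mem_nhds hq)).differentiableAt two_ne_zero
  have h1 : Set.EqOn (pd1 (fun q => c * f q)) (fun q => c * pd1 f q) D := fun q hq => by
    simp only [pd1, fderiv_const_mul (hdf q hq) c]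
    simp
  have h2 : Set.EqOn (pd2 (fun q => c * f q)) (fun q => c * pd2 f q) D := fun q hq => by
    simp only [pd2, fderiv_const_mul (hdf q hq) c]
    simp
  have d1 : DifferentiableAt ℝ (pd1 f) p := diffAt_fderiv_apply hD hf hp (1, 0)
  have d2 : DifferentiableAt ℝ (pd2 f) p := diffAt_fderiv_apply hD hf hp (0, 1)
  have e1 : pd1 (pd1 (fun q => c * f q)) p = c * pd1 (pd1 f) p := by
    have := fderiv_eqOn hD h1 hp
    simp only [pd1] at this ⊢
    have hc := fderiv_const_mul d1 c
    simp only [pd1] at hc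
    rw [this, hc]; simp
  have e2 : pd2 (pd2 (fun q => c * f q)) p = c * pd2 (pd2 f) p := by
    have := fderiv_eqOn hD h2 hp
    simp only [pd2] at this ⊢
    have hc := fderiv_const_mul d2 c
    simp only [pd2] at hc
    rw [this, hc]; simp
  simp only [lap, e1, e2]; ring

theorem spacelike_natural_system_iff_canonical_form
    (D : Set (ℝ × ℝ)) (hD : IsOpen D)
    (X Y : ℝ × ℝ → ℝ)
    (hX : ContDiffOn ℝ 2 X D) (hY : ContDiffOn ℝ 2 Y D)
    (hYrange : ∀ p ∈ D, Y p ∈ Set.Ioo (-(Real.pi / 2)) (Real.pi / 2))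
    (K κ : ℝ × ℝ → ℝ)
    (hK : ∀ p, K p = Real.exp (2 * X p) * Real.cos (Y p))
    (hκ : ∀ p, κ p = Real.exp (2 * X p) * Real.sin (Y p)) :
    ((∀ p ∈ D,
        (K p ^ 2 + κ p ^ 2) ^ ((1 : ℝ) / 4) *
            lap (fun q => Real.log ((K q ^ 2 + κ q ^ 2) ^ ((1 : ℝ) / 8))) p = K p) ∧
      (∀ p ∈ D,
        (K p ^ 2 + κ p ^ 2) ^ ((1 : ℝ) / 4) *
            lap (fun q => Real.arctan (κ q / K q)) p = 2 * κ p)) ↔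
    ((∀ p ∈ D, lap X p = 2 * Real.exp (X p) * Real.cos (Y p)) ∧
      (∀ p ∈ D, lap Y p = 2 * Real.exp (X p) * Real.sin (Y p))) := by
  have hsum : ∀ q, K q ^ 2 + κ q ^ 2 = Real.exp (4 * X q) := by
    intro q
    have h1 : Real.exp (2 * X q) ^ 2 = Real.exp (4 * X q) := by
      rw [sq, ← Real.exp_add]; ring_nf
    have h2 := Real.sin_sq_add_cos_sq (Y q)
    rw [hK, hκ]
    nlinarith [h1, h2]
  have hquarter : ∀ q, (K q ^ 2 + κ q ^ 2) ^ ((1 : ℝ) / 4) = Real.exp (X q) := by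
    intro q
    rw [hsum, Real.rpow_def_of_pos (Real.exp_pos _), Real.log_exp]
    congr 1; ring
  have hlog : (fun q => Real.log ((K q ^ 2 + κ q ^ 2) ^ ((1 : ℝ) / 8))) =
      (fun q => (1 / 2 : ℝ) * X q) := by
    funext q
    rw [hsum, Real.rpow_def_of_pos (Real.exp_pos _), Real.log_exp, Real.log_exp]
    ring
  have harctan : ∀ q ∈ D, Real.arctan (κ q / K q) = Y q := by
    intro q hq
    obtain ⟨h1, h2⟩ := hYrange q hq
    rw [hK, hκ, mul_div_mul_left _ _ (Real.exp_ne_zero _), ← Real.tan_eq_sin_div_cos,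
      Real.arctan_tan h1 h2]
  constructor
  · rintro ⟨e1, e2⟩
    constructor
    · intro p hp
      have := e1 p hp
      rw [hquarter, hlog, lap_const_mul_on hD hX (1/2) hp, hK] at this
      have hA := Real.exp_pos (X p)
      have h2X : Real.exp (2 * X p) = Real.exp (X p) * Real.exp (X p) := by
        rw [← Real.exp_add]; ring_nf
      rw [h2X] at this
      apply mul_left_cancel₀ (ne_of_gt hA)
      nlinarith [this]
    · intro p hp
      have := e2 p hp
      rw [hquarter, lap_congr_on hD harctan hp, hκ] at this
      have hA := Real.exp_pos (X p)
      have h2X : Real.exp (2 * X p) = Real.exp (X p) * Real.exp (X p) := by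
        rw [← Real.exp_add]; ring_nf
      rw [h2X] at this
      apply mul_left_cancel₀ (ne_of_gt hA)
      nlinarith [this]
  · rintro ⟨e1, e2⟩
    constructor
    · intro p hp
      rw [hquarter, hlog, lap_const_mul_on hD hX (1/2) hp, hK, e1 p hp]
      have h2X : Real.exp (2 * X p) = Real.exp (X p) * Real.exp (X p) := by
        rw [← Real.exp_add]; ring_nf
      rw [h2X]; ring
    · intro p hp
      rw [hquarter, lap_congr_on hD harctan hp, hκ, e2 p hp]
      have h2X : Real.exp (2 * X p) = Real.exp (X p) * Real.exp (X p) := by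
        rw [← Real.exp_add]; ring_nf
      rw [h2X]; ring
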